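/- Let V₁ ~ Gamma(p, 1/σ₁) and V₂ ~ Gamma(q, 1/σ₂) be independent, with p, q ≥ 2 integers and σ₁ ≤ σ₂. For estimating σ₂ under quadratic loss (δ/σ₂ − 1)², the estimator δ_S = max{V₂/(q+1), (V₁+V₂)/(p+q+1)} has risk nowhere larger than that of δ₀ = V₂/(q+1), and strictly smaller for some parameter values. -/

import Mathlib

open MeasureTheory Set

namespace Stmt16Aux

open MeasureTheory Set Real


lemma integrableOn_pow_exp (n : ℕ) {b : ℝ} (hb : 0 < b) :
    IntegrableOn (fun x : ℝ => x ^ n * Real.exp (-(b * x))) (Ioi 0) := by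
  have h := integrableOn_rpow_mul_exp_neg_mul_rpow (s := (n : ℝ)) (p := 1)
    (lt_of_lt_of_le neg_one_lt_zero (Nat.cast_nonneg n)) one_pos hb
  refine h.congr_fun (fun x hx => ?_) measurableSet_Ioi
  dsimp only
  rw [rpow_one, rpow_natCast, neg_mul]

lemma integral_pow_exp (n : ℕ) {b : ℝ} (hb : 0 < b) :
    ∫ x in Ioi (0:ℝ), x ^ n * Real.exp (-(b * x)) = (Nat.factorial n) / b ^ (n + 1) := by
  have h := integral_rpow_mul_exp_neg_mul_rpow (p := 1) (q := (n : ℝ)) one_pos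
    (lt_of_lt_of_le neg_one_lt_zero (Nat.cast_nonneg n)) hb
  rw [show (∫ x in Ioi (0:ℝ), x ^ (n:ℝ) * Real.exp (-b * x ^ (1:ℝ))) =
      ∫ x in Ioi (0:ℝ), x ^ n * Real.exp (-(b * x)) from
    setIntegral_congr_fun measurableSet_Ioi (fun x hx => by
      rw [rpow_one, rpow_natCast, neg_mul])] at h
  rw [h, div_one, div_one, div_one, Real.Gamma_nat_eq_factorial, rpow_neg hb.le,
    show ((n:ℝ) + 1) = ((n + 1 : ℕ) : ℝ) by push_cast; ring, rpow_natCast]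
  field_simp

lemma integrableOn_pow_mul_exp_div (n : ℕ) {σ : ℝ} (hσ : 0 < σ) :
    IntegrableOn (fun x : ℝ => x ^ n * Real.exp (-x / σ)) (Ioi 0) := by
  refine (integrableOn_pow_exp n (b := σ⁻¹) (inv_pos.mpr hσ)).congr_fun
    (fun x hx => ?_) measurableSet_Ioi
  dsimp only
  rw [show -(σ⁻¹ * x) = -x / σ by field_simp]

lemma integral_pow_mul_exp_div (n : ℕ) {σ : ℝ} (hσ : 0 < σ) :
    ∫ x in Ioi (0:ℝ), x ^ n * Real.exp (-x / σ) =
      (Nat.factorial n) * σ ^ (n + 1) := by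
  rw [show (∫ x in Ioi (0:ℝ), x ^ n * Real.exp (-x / σ)) =
      ∫ x in Ioi (0:ℝ), x ^ n * Real.exp (-(σ⁻¹ * x)) from
    setIntegral_congr_fun measurableSet_Ioi (fun x hx => by
      rw [show -(σ⁻¹ * x) = -x / σ by field_simp]),
    integral_pow_exp n (inv_pos.mpr hσ), inv_pow]
  field_simp


noncomputable def dens (σ : ℝ) (n : ℕ) (x : ℝ) : ℝ :=
  x ^ n * Real.exp (-x / σ) / (σ ^ (n + 1) * (Nat.factorial n))

lemma continuous_dens (σ : ℝ) (n : ℕ) : Continuous (dens σ n) := by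
  unfold dens
  fun_prop

lemma dens_nonneg {σ : ℝ} (hσ : 0 < σ) (n : ℕ) {x : ℝ} (hx : 0 ≤ x) :
    0 ≤ dens σ n x := by
  unfold dens
  positivity

lemma integrableOn_dens {σ : ℝ} (hσ : 0 < σ) (n : ℕ) :
    IntegrableOn (dens σ n) (Ioi 0) := by
  unfold dens
  simp_rw [div_eq_mul_inv]
  exact (integrableOn_pow_mul_exp_div n hσ).mul_const _

lemma integrable_bound {σ : ℝ} (hσ : 0 < σ) (s : ℝ) (n : ℕ) :
    IntegrableOn (fun x : ℝ => (1 + x / s) ^ 2 * dens σ n x) (Ioi 0) := by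
  have e0 := integrableOn_pow_mul_exp_div n hσ
  have e1 := integrableOn_pow_mul_exp_div (n + 1) hσ
  have e2 := integrableOn_pow_mul_exp_div (n + 2) hσ
  have h := ((e0.const_mul ((σ ^ (n+1) * (Nat.factorial n))⁻¹)).add
      (e1.const_mul (2 / s * (σ ^ (n+1) * (Nat.factorial n))⁻¹))).add
      (e2.const_mul ((1/s)^2 * (σ ^ (n+1) * (Nat.factorial n))⁻¹))
  refine IntegrableOn.congr_fun h (fun x hx => ?_) measurableSet_Ioi
  simp only [Pi.add_apply]
  unfold dens
  ring


noncomputable def G (σ₁ σ₂ : ℝ) (a b : ℕ) (δ : ℝ × ℝ → ℝ) (v : ℝ × ℝ) : ℝ :=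
  (δ v / σ₂ - 1) ^ 2 * dens σ₁ a v.1 * dens σ₂ b v.2

lemma continuous_G {σ₁ σ₂ : ℝ} (a b : ℕ) {δ : ℝ × ℝ → ℝ} (hδ : Continuous δ) :
    Continuous (G σ₁ σ₂ a b δ) := by
  unfold G
  have h1 := (continuous_dens σ₁ a).comp (continuous_fst : Continuous (Prod.fst : ℝ × ℝ → ℝ))
  have h2 := (continuous_dens σ₂ b).comp (continuous_snd : Continuous (Prod.snd : ℝ × ℝ → ℝ))
  fun_prop

lemma integrable_G {σ₁ σ₂ : ℝ} (h1 : 0 < σ₁) (h2 : 0 < σ₂) (a b : ℕ)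
    {δ : ℝ × ℝ → ℝ} (hδ : Continuous δ)
    (hδb : ∀ v : ℝ × ℝ, 0 < v.1 → 0 < v.2 → |δ v| ≤ v.1 + v.2) :
    IntegrableOn (G σ₁ σ₂ a b δ) (Ioi (0:ℝ) ×ˢ Ioi (0:ℝ)) := by
  have hmeas : MeasurableSet (Ioi (0:ℝ) ×ˢ Ioi (0:ℝ)) :=
    measurableSet_Ioi.prod measurableSet_Ioi
  unfold IntegrableOn
  refine Integrable.mono'
      (g := fun v : ℝ × ℝ => ((1 + v.1 / σ₂) ^ 2 * dens σ₁ a v.1) *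
        ((1 + v.2 / σ₂) ^ 2 * dens σ₂ b v.2)) ?_ ?_ ?_
  · rw [Measure.volume_eq_prod, ← Measure.prod_restrict]
    exact (integrable_bound h1 σ₂ a).mul_prod (integrable_bound h2 σ₂ b)
  · exact ((continuous_G a b hδ).aestronglyMeasurable).restrict
  · filter_upwards [ae_restrict_mem hmeas] with v hv
    obtain ⟨hv1, hv2⟩ := hv
    rw [mem_Ioi] at hv1 hv2
    have hd1 : 0 ≤ dens σ₁ a v.1 := dens_nonneg h1 a hv1.le
    have hd2 : 0 ≤ dens σ₂ b v.2 := dens_nonneg h2 b hv2.le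
    have habs := hδb v hv1 hv2
    obtain ⟨hl, hr⟩ := abs_le.mp habs
    have hsq : (δ v / σ₂ - 1) ^ 2 ≤ ((1 + v.1 / σ₂) * (1 + v.2 / σ₂)) ^ 2 := by
      have hx : 0 < v.1 / σ₂ := by positivity
      have hy : 0 < v.2 / σ₂ := by positivity
      have hU : δ v / σ₂ ≤ v.1 / σ₂ + v.2 / σ₂ := by
        rw [← add_div]
        gcongr
      have hL : -(v.1 / σ₂ + v.2 / σ₂) ≤ δ v / σ₂ := by
        rw [← add_div, ← neg_div]
        gcongr
      have ha : 0 ≤ (1 + v.1 / σ₂) * (1 + v.2 / σ₂) + (δ v / σ₂ - 1) := by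
        nlinarith [mul_pos hx hy]
      have hb : 0 ≤ (1 + v.1 / σ₂) * (1 + v.2 / σ₂) - (δ v / σ₂ - 1) := by
        nlinarith [mul_pos hx hy]
      nlinarith [mul_nonneg ha hb]
    calc ‖G σ₁ σ₂ a b δ v‖ = (δ v / σ₂ - 1) ^ 2 * dens σ₁ a v.1 * dens σ₂ b v.2 := by
          rw [Real.norm_eq_abs]
          unfold G
          rw [abs_of_nonneg (by positivity)]
      _ ≤ ((1 + v.1 / σ₂) * (1 + v.2 / σ₂)) ^ 2 * dens σ₁ a v.1 * dens σ₂ b v.2 := by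
          apply mul_le_mul_of_nonneg_right (mul_le_mul_of_nonneg_right hsq hd1) hd2
      _ = (1 + v.1 / σ₂) ^ 2 * dens σ₁ a v.1 * ((1 + v.2 / σ₂) ^ 2 * dens σ₂ b v.2) := by
          ring


set_option maxHeartbeats 2000000 in
theorem key (a b : ℕ) {σ₁ σ₂ : ℝ} (h1 : 0 < σ₁) (h12 : σ₁ ≤ σ₂) :
    (∫ v in Ioi (0:ℝ) ×ˢ Ioi (0:ℝ), G σ₁ σ₂ a b
        (fun v => max (v.2 / ((b:ℝ)+1+1)) ((v.1+v.2) / ((a:ℝ)+1+((b:ℝ)+1)+1))) v) <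
    ∫ v in Ioi (0:ℝ) ×ˢ Ioi (0:ℝ), G σ₁ σ₂ a b (fun v => v.2 / ((b:ℝ)+1+1)) v := by
  have h2 : 0 < σ₂ := lt_of_lt_of_le h1 h12
  set k : ℝ := (b:ℝ)+1+1 with hk
  set c : ℝ := (a:ℝ)+1+((b:ℝ)+1)+1 with hc
  have hkpos : 0 < k := by rw [hk]; positivity
  have hcpos : 0 < c := by rw [hc]; positivity
  have hkc : c = k + ((a:ℝ)+1) := by rw [hk, hc]; ring
  have hk1 : 1 ≤ k := by rw [hk]; have : (0:ℝ) ≤ (b:ℝ) := Nat.cast_nonneg b; linarith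
  have hc1 : 1 ≤ c := by rw [hc]; have : (0:ℝ) ≤ (a:ℝ) := Nat.cast_nonneg a
                         have : (0:ℝ) ≤ (b:ℝ) := Nat.cast_nonneg b; linarith
  set δS : ℝ × ℝ → ℝ := fun v => max (v.2 / k) ((v.1+v.2) / c) with hδS
  set δ0 : ℝ × ℝ → ℝ := fun v => v.2 / k with hδ0
  set S : Set (ℝ × ℝ) := Ioi (0:ℝ) ×ˢ Ioi (0:ℝ) with hS
  have hmeasS : MeasurableSet S := measurableSet_Ioi.prod measurableSet_Ioi
  have hcS : Continuous δS := (continuous_snd.div_const _).max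
    ((continuous_fst.add continuous_snd).div_const _)
  have hc0 : Continuous δ0 := continuous_snd.div_const _
  have hbS : ∀ v : ℝ × ℝ, 0 < v.1 → 0 < v.2 → |δS v| ≤ v.1 + v.2 := by
    intro v hv1 hv2
    rw [hδS]
    rw [abs_of_nonneg (le_max_of_le_left (by positivity))]
    exact max_le ((div_le_self hv2.le hk1).trans (by linarith))
      (div_le_self (by linarith) hc1)
  have hb0 : ∀ v : ℝ × ℝ, 0 < v.1 → 0 < v.2 → |δ0 v| ≤ v.1 + v.2 := by
    intro v hv1 hv2
    rw [hδ0, abs_of_nonneg (by positivity)]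
    exact (div_le_self hv2.le hk1).trans (by linarith)
  have hGS : IntegrableOn (G σ₁ σ₂ a b δS) S := integrable_G h1 h2 a b hcS hbS
  have hG0 : IntegrableOn (G σ₁ σ₂ a b δ0) S := integrable_G h1 h2 a b hc0 hb0
  set μ : Measure ℝ := volume.restrict (Ioi 0) with hμ
  have hprod : (volume : Measure (ℝ × ℝ)).restrict S = μ.prod μ := by
    rw [hμ, Measure.prod_restrict, ← Measure.volume_eq_prod, hS]
  rw [← sub_neg, ← integral_sub hGS hG0, hprod]
  have hHint : Integrable (fun v => G σ₁ σ₂ a b δS v - G σ₁ σ₂ a b δ0 v) (μ.prod μ) := by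
    rw [← hprod]; exact hGS.sub hG0
  set H : ℝ × ℝ → ℝ := fun v => G σ₁ σ₂ a b δS v - G σ₁ σ₂ a b δ0 v with hH
  have hHc : Continuous H := (continuous_G a b hcS).sub (continuous_G a b hc0)
  rw [integral_prod_symm _ hHint]
  set T : ℝ × ℝ → ℝ := fun w => w.2 * H (w.2 * w.1, w.2) with hT
  have hTc : Continuous T := continuous_snd.mul
    (hHc.comp ((continuous_snd.mul continuous_fst).prodMk continuous_snd))
  have step4 : ∀ y : ℝ, y ∈ Ioi (0:ℝ) → (∫ x, H (x, y) ∂μ) = ∫ z, T (z, y) ∂μ := by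
    intro y hy
    rw [mem_Ioi] at hy
    have h := integral_comp_mul_left_Ioi (fun x => H (x, y)) 0 hy
    rw [mul_zero] at h
    calc (∫ x, H (x, y) ∂μ) = y * (y⁻¹ • ∫ x in Ioi (0:ℝ), H (x, y)) := by
          rw [smul_eq_mul, ← mul_assoc, mul_inv_cancel₀ hy.ne', one_mul]
      _ = y * ∫ z in Ioi (0:ℝ), H (y * z, y) := by rw [← h]
      _ = ∫ z in Ioi (0:ℝ), y * H (y * z, y) := (integral_const_mul _ _).symm
      _ = ∫ z, T (z, y) ∂μ := rfl
  have hTint : Integrable T (μ.prod μ) := by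
    refine (integrable_prod_iff' hTc.aestronglyMeasurable).mpr ⟨?_, ?_⟩
    · filter_upwards [hHint.prod_left_ae, ae_restrict_mem measurableSet_Ioi] with y hyint hy
      rw [mem_Ioi] at hy
      have h := (integrableOn_Ioi_comp_mul_left_iff (fun x => H (x, y)) 0 hy)
      rw [mul_zero] at h
      exact (h.mpr hyint).const_mul y
    · refine (hHint.integral_norm_prod_right).congr ?_
      filter_upwards [ae_restrict_mem measurableSet_Ioi] with y hy
      rw [mem_Ioi] at hy
      have h := integral_comp_mul_left_Ioi (fun x => ‖H (x, y)‖) 0 hy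
      rw [mul_zero] at h
      calc (∫ x, ‖H (x, y)‖ ∂μ) = y * (y⁻¹ • ∫ x in Ioi (0:ℝ), ‖H (x, y)‖) := by
            rw [smul_eq_mul, ← mul_assoc, mul_inv_cancel₀ hy.ne', one_mul]
        _ = y * ∫ z in Ioi (0:ℝ), ‖H (y * z, y)‖ := by rw [← h]
        _ = ∫ z in Ioi (0:ℝ), y * ‖H (y * z, y)‖ := (integral_const_mul _ _).symm
        _ = ∫ x, ‖T (x, y)‖ ∂μ := by
            refine setIntegral_congr_fun measurableSet_Ioi (fun z hz => ?_)
            simp [hT, Real.norm_eq_abs, abs_of_pos hy]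
  have e1 : (∫ y, ∫ x, H (x, y) ∂μ ∂μ) = ∫ y, ∫ z, T (z, y) ∂μ ∂μ := by
    refine integral_congr_ae ?_
    filter_upwards [ae_restrict_mem measurableSet_Ioi] with y hy
    exact step4 y hy
  rw [e1, ← integral_integral_swap hTint]
  -- now: ∫ x, ∫ y, T (x, y) ∂μ ∂μ < 0
  have hσ₁ne : σ₁ ≠ 0 := ne_of_gt h1
  have hσ₂ne : σ₂ ≠ 0 := ne_of_gt h2
  have hkne : k ≠ 0 := ne_of_gt hkpos
  have hcne : c ≠ 0 := ne_of_gt hcpos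
  have hfa : (0:ℝ) < (Nat.factorial a : ℝ) := by exact_mod_cast Nat.factorial_pos a
  have hfb : (0:ℝ) < (Nat.factorial b : ℝ) := by exact_mod_cast Nat.factorial_pos b
  have hfab : (0:ℝ) < (Nat.factorial (a+b+2) : ℝ) := by exact_mod_cast Nat.factorial_pos _
  have hform : ∀ z : ℝ, 0 < z → (∫ y, T (z, y) ∂μ) =
      ((z^a / (σ₁^(a+1) * (Nat.factorial a : ℝ) * (σ₂^(b+1) * (Nat.factorial b : ℝ)))) *
        ((Nat.factorial (a+b+2) : ℝ) / (z/σ₁ + 1/σ₂)^(a+b+3+1)) / σ₂) *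
      ((max (1/k) ((1+z)/c)) - 1/k) *
      ((max (1/k) ((1+z)/c) + 1/k) * c / σ₂ - 2*(z/σ₁ + 1/σ₂)) := by
    intro z hz
    have hlam0 : 0 < z/σ₁ + 1/σ₂ := by positivity
    have hlamne : z/σ₁ + 1/σ₂ ≠ 0 := ne_of_gt hlam0
    have hpt : ∀ y ∈ Ioi (0:ℝ), T (z, y) =
        ((z^a / (σ₁^(a+1) * (Nat.factorial a : ℝ) * (σ₂^(b+1) * (Nat.factorial b : ℝ)))) *
          ((max (1/k) ((1+z)/c)/σ₂)^2 - (1/k/σ₂)^2)) *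
            (y^(a+b+3) * Real.exp (-((z/σ₁ + 1/σ₂) * y)))
        + ((z^a / (σ₁^(a+1) * (Nat.factorial a : ℝ) * (σ₂^(b+1) * (Nat.factorial b : ℝ)))) * (-2) *
          (max (1/k) ((1+z)/c)/σ₂ - 1/k/σ₂)) *
            (y^(a+b+2) * Real.exp (-((z/σ₁ + 1/σ₂) * y))) := by
      intro y hy
      rw [mem_Ioi] at hy
      have hmax : max (y / k) ((y*z + y)/c) = y * max (1/k) ((1+z)/c) := by
        rw [mul_max_of_nonneg _ _ hy.le,
          show y * (1/k) = y/k from by ring, show y * ((1+z)/c) = (y*z+y)/c from by ring]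
      have hexp : Real.exp (-(y*z)/σ₁) * Real.exp (-y/σ₂) =
          Real.exp (-((z/σ₁ + 1/σ₂)*y)) := by
        rw [← Real.exp_add]
        congr 1
        field_simp
        ring
      show y * (G σ₁ σ₂ a b δS (y*z, y) - G σ₁ σ₂ a b δ0 (y*z, y)) = _
      unfold G dens
      simp only [hδS, hδ0]
      rw [hmax]
      linear_combination (y * ((y * max (1/k) ((1+z)/c) / σ₂ - 1)^2 - (y/k/σ₂ - 1)^2) *
        ((y*z)^a / (σ₁^(a+1) * (Nat.factorial a : ℝ))) *
        (y^b / (σ₂^(b+1) * (Nat.factorial b : ℝ)))) * hexp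
    have hJz : (∫ y, T (z, y) ∂μ) =
        ((z^a / (σ₁^(a+1) * (Nat.factorial a : ℝ) * (σ₂^(b+1) * (Nat.factorial b : ℝ)))) *
          ((max (1/k) ((1+z)/c)/σ₂)^2 - (1/k/σ₂)^2)) *
          ((Nat.factorial (a+b+3) : ℝ) / (z/σ₁ + 1/σ₂)^(a+b+3+1))
        + ((z^a / (σ₁^(a+1) * (Nat.factorial a : ℝ) * (σ₂^(b+1) * (Nat.factorial b : ℝ)))) * (-2) *
          (max (1/k) ((1+z)/c)/σ₂ - 1/k/σ₂)) *
          ((Nat.factorial (a+b+2) : ℝ) / (z/σ₁ + 1/σ₂)^(a+b+2+1)) := by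
      rw [hμ]
      rw [setIntegral_congr_fun measurableSet_Ioi hpt]
      rw [integral_add ((integrableOn_pow_exp _ hlam0).const_mul _)
        ((integrableOn_pow_exp _ hlam0).const_mul _)]
      rw [integral_const_mul, integral_const_mul, integral_pow_exp _ hlam0,
        integral_pow_exp _ hlam0]
    rw [hJz]
    have hfs : (Nat.factorial (a+b+3) : ℝ) = c * (Nat.factorial (a+b+2) : ℝ) := by
      rw [show a+b+3 = (a+b+2)+1 by omega, Nat.factorial_succ, hc]
      push_cast
      ring
    rw [hfs]
    have h4 : (z/σ₁ + 1/σ₂)^(a+b+3+1) = (z/σ₁ + 1/σ₂)^(a+b+2+1) * (z/σ₁+1/σ₂) := by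
      rw [← pow_succ]
    rw [h4]
    field_simp
    ring
  have hpos : ∀ z : ℝ, 0 < z → 0 <
      ((z^a / (σ₁^(a+1) * (Nat.factorial a : ℝ) * (σ₂^(b+1) * (Nat.factorial b : ℝ)))) *
        ((Nat.factorial (a+b+2) : ℝ) / (z/σ₁ + 1/σ₂)^(a+b+3+1)) / σ₂) := by
    intro z hz
    have hlam0 : 0 < z/σ₁ + 1/σ₂ := by positivity
    positivity
  have hbr : ∀ z : ℝ, 0 < z → 1/k < (1+z)/c →
      ((max (1/k) ((1+z)/c) + 1/k) * c / σ₂ - 2*(z/σ₁ + 1/σ₂)) < 0 := by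
    intro z hz hlt
    rw [max_eq_right hlt.le]
    have hzk : (a:ℝ)+1 < z*k := by
      have h' := (div_lt_div_iff₀ hkpos hcpos).mp hlt
      nlinarith [hkc]
    have hz0 : ((a:ℝ)+1)/k < z := (div_lt_iff₀ hkpos).mpr hzk
    have h2z : 2*z/σ₂ ≤ 2*z/σ₁ := by gcongr <;> linarith
    have he : ((1+z)/c + 1/k) * c = (1+z) + c/k := by
      rw [add_mul, div_mul_cancel₀ _ hcne, one_div_mul_eq_div]
    rw [he]
    have hck1 : c/k = ((a:ℝ)+1)/k + 1 := by
      rw [hkc, add_div, div_self hkne, add_comm]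
    calc ((1+z) + c/k)/σ₂ - 2*(z/σ₁ + 1/σ₂)
        = ((1+z)+c/k)/σ₂ - 2*z/σ₁ - 2/σ₂ := by ring
      _ ≤ ((1+z)+c/k)/σ₂ - 2*z/σ₂ - 2/σ₂ := by linarith
      _ = ((1+z) + c/k - (2*z + 2))/σ₂ := by ring
      _ < 0 := div_neg_of_neg_of_pos (by rw [hck1]; linarith) h2
  have hJlt : ∀ z : ℝ, 0 < z → 1/k < (1+z)/c → (∫ y, T (z, y) ∂μ) < 0 := by
    intro z hz hl
    rw [hform z hz]
    apply mul_neg_of_pos_of_neg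
    · apply mul_pos (hpos z hz)
      rw [max_eq_right hl.le]
      linarith
    · exact hbr z hz hl
  have hJle : ∀ z : ℝ, 0 < z → (∫ y, T (z, y) ∂μ) ≤ 0 := by
    intro z hz
    rcases le_or_gt ((1+z)/c) (1/k) with hle | hlt
    · rw [hform z hz, max_eq_left hle]
      simp
    · exact (hJlt z hz hlt).le
  have hJint : Integrable (fun z => ∫ y, T (z, y) ∂μ) μ := hTint.integral_prod_left
  have hIoisub : Ioi (((a:ℝ)+1)/k) ⊆
      (Function.support fun z => -(∫ y, T (z, y) ∂μ)) ∩ Ioi 0 := by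
    intro x hx
    rw [mem_Ioi] at hx
    have hx0 : 0 < x := lt_of_le_of_lt (div_nonneg (by positivity) hkpos.le) hx
    have hxl : 1/k < (1+x)/c := by
      rw [div_lt_div_iff₀ hkpos hcpos]
      have h' := (div_lt_iff₀ hkpos).mp hx
      nlinarith [hkc]
    constructor
    · exact ne_of_gt (neg_pos.mpr (hJlt x hx0 hxl))
    · exact mem_Ioi.mpr hx0
  have hsupp : 0 < volume ((Function.support fun z => -(∫ y, T (z, y) ∂μ)) ∩ Ioi 0) := by
    refine lt_of_lt_of_le ?_ (measure_mono hIoisub)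
    rw [Real.volume_Ioi]
    exact ENNReal.zero_lt_top
  have hnn : 0 ≤ᵐ[volume.restrict (Ioi 0)] fun z => -(∫ y, T (z, y) ∂μ) := by
    filter_upwards [ae_restrict_mem measurableSet_Ioi] with z hz
    exact neg_nonneg.mpr (hJle z hz)
  have hint' : IntegrableOn (fun z => -(∫ y, T (z, y) ∂μ)) (Ioi 0) := by
    rw [IntegrableOn, ← hμ]
    exact hJint.neg
  have hposint := (setIntegral_pos_iff_support_of_nonneg_ae hnn hint').mpr hsupp
  rw [integral_neg] at hposint
  have hgoal : (∫ x, ∫ y, T (x, y) ∂μ ∂μ) = ∫ z in Ioi (0:ℝ), ∫ y, T (z, y) ∂μ := by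
    rw [hμ]
  rw [hgoal]
  linarith

end Stmt16Aux


/-- Stein-type domination for σ₂: under quadratic loss, δ_S = max{V₂/(q+1), (V₁+V₂)/(p+q+1)}
dominates the BAEE δ₀ = V₂/(q+1) whenever σ₁ ≤ σ₂, strictly for some parameter values. -/
theorem stmt16 (p q : ℕ) (hp : 2 ≤ p) (hq : 2 ≤ q)
    (risk : ℝ → ℝ → (ℝ → ℝ → ℝ) → ℝ)
    (hrisk : ∀ σ₁ σ₂ : ℝ, ∀ δ : ℝ → ℝ → ℝ, risk σ₁ σ₂ δ =
      ∫ v in Set.Ioi (0 : ℝ) ×ˢ Set.Ioi (0 : ℝ),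
        (δ v.1 v.2 / σ₂ - 1) ^ 2 *
          (v.1 ^ (p - 1) * Real.exp (-v.1 / σ₁) / (σ₁ ^ p * (Nat.factorial (p - 1)))) *
          (v.2 ^ (q - 1) * Real.exp (-v.2 / σ₂) / (σ₂ ^ q * (Nat.factorial (q - 1))))) :
    (∀ σ₁ σ₂ : ℝ, 0 < σ₁ → σ₁ ≤ σ₂ →
      risk σ₁ σ₂ (fun v₁ v₂ => max (v₂ / ((q : ℝ) + 1)) ((v₁ + v₂) / ((p : ℝ) + q + 1))) ≤
        risk σ₁ σ₂ (fun v₁ v₂ => v₂ / ((q : ℝ) + 1))) ∧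
    (∃ σ₁ σ₂ : ℝ, 0 < σ₁ ∧ σ₁ ≤ σ₂ ∧
      risk σ₁ σ₂ (fun v₁ v₂ => max (v₂ / ((q : ℝ) + 1)) ((v₁ + v₂) / ((p : ℝ) + q + 1))) <
        risk σ₁ σ₂ (fun v₁ v₂ => v₂ / ((q : ℝ) + 1))) := by
  obtain ⟨a, rfl⟩ : ∃ a, p = a + 1 := ⟨p - 1, by omega⟩
  obtain ⟨b, rfl⟩ : ∃ b, q = b + 1 := ⟨q - 1, by omega⟩
  have main : ∀ σ₁ σ₂ : ℝ, 0 < σ₁ → σ₁ ≤ σ₂ →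
      risk σ₁ σ₂ (fun v₁ v₂ => max (v₂ / (((b+1 : ℕ) : ℝ) + 1))
          ((v₁ + v₂) / (((a+1 : ℕ) : ℝ) + ((b+1:ℕ):ℝ) + 1))) <
        risk σ₁ σ₂ (fun v₁ v₂ => v₂ / (((b+1:ℕ) : ℝ) + 1)) := by
    intro σ₁ σ₂ h1 h12
    rw [hrisk, hrisk]
    have h := Stmt16Aux.key a b h1 h12
    simp only [Stmt16Aux.G, Stmt16Aux.dens] at h
    simp only [Nat.add_sub_cancel, Nat.cast_add, Nat.cast_one]
    exact h
  exact ⟨fun σ₁ σ₂ h1 h12 => (main σ₁ σ₂ h1 h12).le, 1, 1, one_pos, le_rfl, main 1 1 one_pos le_rfl⟩
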